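/- Let G be a finite group, H a normal subgroup, and V, W irreducible complex representations of G. If Hom_H(Res_H V, Res_H W) ≠ 0, then Res_H V / dim V and Res_H W / dim W have the same character on H; i.e., χ_V(h)/χ_V(1) = χ_W(h)/χ_W(1) for all h ∈ H. -/

import Mathlib

open CategoryTheory

/-- For any `h : G` and simple `U : FDRep ℂ G`, the averaged operator
`∑ g, U.ρ (g * h * g⁻¹)` is a scalar `c` with `c * χ_U(1) = |G| * χ_U(h)`. -/
lemma clifford_aux_exists_scalar {G : Type} [Group G] [Fintype G]
    (U : FDRep ℂ G) [Simple U] (h : G) :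
    ∃ c : ℂ, (∑ g : G, U.ρ (g * h * g⁻¹) : U →ₗ[ℂ] U) = c • LinearMap.id ∧
      c * U.character 1 = (Fintype.card G : ℂ) * U.character h := by
  set P : U →ₗ[ℂ] U := ∑ g : G, U.ρ (g * h * g⁻¹) with hP
  have comm : ∀ x : G, P * U.ρ x = U.ρ x * P := by
    intro x
    rw [hP, Finset.sum_mul, Finset.mul_sum]
    refine Fintype.sum_equiv (Equiv.mulLeft x⁻¹) _ _ fun g => ?_
    rw [← map_mul, ← map_mul]
    congr 1
    simp only [Equiv.coe_mulLeft]
    group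
  let φ : U ⟶ U := ⟨FGModuleCat.ofHom P, fun x => by
    ext v
    exact LinearMap.congr_fun (comm x) v⟩
  obtain ⟨c, hc⟩ := endomorphism_simple_eq_smul_id (X := U) ℂ φ
  have hchom : P = c • LinearMap.id := by
    have := congrArg (fun ψ : U ⟶ U => ψ.hom.hom.hom) hc
    exact this.symm
  refine ⟨c, hchom, ?_⟩
  have htr : LinearMap.trace ℂ U P = (Fintype.card G : ℂ) * U.character h := by
    rw [hP, map_sum]
    have he : ∀ g : G, (g ∈ Finset.univ) →
        LinearMap.trace ℂ U (U.ρ (g * h * g⁻¹)) = U.character h := fun g _ => U.char_conj h g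
    rw [Finset.sum_congr rfl he, Finset.sum_const, Finset.card_univ, nsmul_eq_mul]
  have htr2 : LinearMap.trace ℂ U P = c * U.character 1 := by
    rw [hchom, map_smul, LinearMap.trace_id, FDRep.char_one, smul_eq_mul]
  rw [← htr2, htr]

/-- Let `G` be a finite group, `H` a normal subgroup, and `V`, `W` irreducible complex
representations of `G`. If there is a nonzero `H`-equivariant linear map
`Res_H V → Res_H W`, then the normalized restricted characters agree:
`χ_V(h)/χ_V(1) = χ_W(h)/χ_W(1)` for all `h ∈ H`. -/
theorem clifford_normalized_characters {G : Type} [Group G] [Fintype G]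
    (H : Subgroup G) [H.Normal]
    (V W : FDRep ℂ G) [Simple V] [Simple W]
    (f : V →ₗ[ℂ] W) (hf : f ≠ 0)
    (hequiv : ∀ h ∈ H, ∀ v : V, f (V.ρ h v) = W.ρ h (f v)) :
    ∀ h ∈ H, V.character h / V.character 1 = W.character h / W.character 1 := by
  intro h hH
  obtain ⟨v, hv⟩ : ∃ v : V, f v ≠ 0 := by
    by_contra hc
    push_neg at hc
    exact hf (LinearMap.ext fun v => hc v)
  haveI hVnt : Nontrivial V := ⟨v, 0, fun e => hv (by rw [e, map_zero])⟩
  haveI hWnt : Nontrivial W := ⟨f v, 0, hv⟩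
  have hcard : (Fintype.card G : ℂ) ≠ 0 := Nat.cast_ne_zero.mpr Fintype.card_ne_zero
  have hχV1 : V.character 1 ≠ 0 := by
    rw [FDRep.char_one]
    exact_mod_cast Nat.cast_ne_zero.mpr Module.finrank_pos.ne'
  have hχW1 : W.character 1 ≠ 0 := by
    rw [FDRep.char_one]
    exact_mod_cast Nat.cast_ne_zero.mpr Module.finrank_pos.ne'
  obtain ⟨cV, hPV, hcV⟩ := clifford_aux_exists_scalar V h
  obtain ⟨cW, hPW, hcW⟩ := clifford_aux_exists_scalar W h
  have key : f ∘ₗ (∑ g : G, V.ρ (g * h * g⁻¹) : V →ₗ[ℂ] V)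
      = (∑ g : G, W.ρ (g * h * g⁻¹) : W →ₗ[ℂ] W) ∘ₗ f := by
    ext u
    simp only [LinearMap.comp_apply, LinearMap.sum_apply, map_sum]
    refine Finset.sum_congr rfl fun g _ => ?_
    exact hequiv (g * h * g⁻¹) (Subgroup.Normal.conj_mem ‹H.Normal› h hH g) u
  rw [hPV, hPW] at key
  have key2 : cV • f = cW • f := by
    ext u
    have := LinearMap.congr_fun key u
    simpa using this
  have hcc : cV = cW := by
    have h0 : (cV - cW) • f = 0 := by rw [sub_smul, key2, sub_self]
    rcases smul_eq_zero.mp h0 with h1 | h1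
    · exact sub_eq_zero.mp h1
    · exact absurd h1 hf
  have e1 : V.character h / V.character 1 = cV / (Fintype.card G : ℂ) := by
    rw [div_eq_div_iff hχV1 hcard]
    linear_combination -hcV
  have e2 : W.character h / W.character 1 = cW / (Fintype.card G : ℂ) := by
    rw [div_eq_div_iff hχW1 hcard]
    linear_combination -hcW
  rw [e1, e2, hcc]
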